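/- Let B ⊆ [n-1] × [m-1] be grid-unimodal, meaning B is grid-connected and for every i, the set {j : (i,j) ∈ B} is an interval of integers, and for every j, the set {i : (i,j) ∈ B} is an interval of integers. If |B| > 1, then there exists (i₀,j₀) ∈ B such that B \ {(i₀,j₀)} is again grid-unimodal and (i₀,j₀) has at least one grid-neighbor in B \ {(i₀,j₀)}. -/

import Mathlib

/-- Two grid cells are adjacent iff they differ by 1 in exactly one coordinate. -/
def gridAdj (u v : ℕ × ℕ) : Prop :=
  (u.1 = v.1 ∧ (v.2 = u.2 + 1 ∨ u.2 = v.2 + 1)) ∨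
    (u.2 = v.2 ∧ (v.1 = u.1 + 1 ∨ u.1 = v.1 + 1))

/-- `B` is grid-connected. -/
def gridConnected (B : Finset (ℕ × ℕ)) : Prop :=
  B.Nonempty ∧ ∀ p ∈ B, ∀ q ∈ B,
    Relation.ReflTransGen (fun u v => u ∈ B ∧ v ∈ B ∧ gridAdj u v) p q

/-- All row sections and all column sections of `B` are intervals of integers. -/
def sectionsAreIntervals (B : Finset (ℕ × ℕ)) : Prop :=
  (∀ i j₁ j₂ j₃ : ℕ, j₁ ≤ j₂ → j₂ ≤ j₃ → (i, j₁) ∈ B → (i, j₃) ∈ B → (i, j₂) ∈ B) ∧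
    (∀ j i₁ i₂ i₃ : ℕ, i₁ ≤ i₂ → i₂ ≤ i₃ → (i₁, j) ∈ B → (i₃, j) ∈ B → (i₂, j) ∈ B)

/-- `B` is grid-unimodal: grid-connected with all row and column sections intervals. -/
def gridUnimodal (B : Finset (ℕ × ℕ)) : Prop :=
  gridConnected B ∧ sectionsAreIntervals B

/- ----------  auxiliary material ---------- -/

def conn (B : Finset (ℕ × ℕ)) : ℕ × ℕ → ℕ × ℕ → Prop :=
  Relation.ReflTransGen (fun u v => u ∈ B ∧ v ∈ B ∧ gridAdj u v)

lemma gridAdj_symm {u v : ℕ × ℕ} (h : gridAdj u v) : gridAdj v u := by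
  unfold gridAdj at *
  rcases h with ⟨h1, h2 | h2⟩ | ⟨h1, h2 | h2⟩
  · exact Or.inl ⟨h1.symm, Or.inr h2⟩
  · exact Or.inl ⟨h1.symm, Or.inl h2⟩
  · exact Or.inr ⟨h1.symm, Or.inr h2⟩
  · exact Or.inr ⟨h1.symm, Or.inl h2⟩

lemma gridAdj_irrefl (u : ℕ × ℕ) : ¬ gridAdj u u := by
  rcases u with ⟨a, b⟩
  rintro (⟨_, h | h⟩ | ⟨_, h | h⟩) <;> omega

lemma conn_symm {B : Finset (ℕ × ℕ)} {u v : ℕ × ℕ} (h : conn B u v) : conn B v u :=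
  (@Relation.ReflTransGen.symmetric _ _
    ⟨fun _ _ h' => ⟨h'.2.1, h'.1, gridAdj_symm h'.2.2⟩⟩).symm _ _ h

lemma conn_closed {B : Finset (ℕ × ℕ)} {P : ℕ × ℕ → Prop}
    (hP : ∀ x y, x ∈ B → y ∈ B → gridAdj x y → P x → P y)
    {u v : ℕ × ℕ} (h : conn B u v) (hu : P u) : P v := by
  induction h with
  | refl => exact hu
  | tail _ hstep ih => exact hP _ _ hstep.1 hstep.2.1 hstep.2.2 ih

lemma erase_connected {B : Finset (ℕ × ℕ)} {p : ℕ × ℕ}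
    (hB : gridConnected B) (hne : (B.erase p).Nonempty)
    (h : ∀ y z, y ∈ B.erase p → z ∈ B.erase p → gridAdj p y → gridAdj p z →
      conn (B.erase p) y z) :
    gridConnected (B.erase p) := by
  refine ⟨hne, ?_⟩
  intro u hu v hv
  have hpath := hB.2 u (Finset.mem_of_mem_erase hu) v (Finset.mem_of_mem_erase hv)
  have key : ∀ w, Relation.ReflTransGen (fun a b => a ∈ B ∧ b ∈ B ∧ gridAdj a b) u w →
      (w ≠ p → conn (B.erase p) u w) ∧
      (w = p → ∀ y ∈ B.erase p, gridAdj p y → conn (B.erase p) u y) := by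
    intro w h'
    induction h' with
    | refl =>
      refine ⟨fun _ => Relation.ReflTransGen.refl, fun hup => ?_⟩
      exact absurd hup (Finset.ne_of_mem_erase hu)
    | @tail w v hwpath hstep ih =>
      obtain ⟨hwB, hvB, hadj⟩ := hstep
      by_cases hvp : v = p
      · rw [hvp] at hadj
        refine ⟨fun h' => absurd hvp h', fun _ y hy hady => ?_⟩
        have hwp : w ≠ p := by
          intro h''; rw [h''] at hadj; exact gridAdj_irrefl p hadj
        have hw' : w ∈ B.erase p := Finset.mem_erase.mpr ⟨hwp, hwB⟩
        exact (ih.1 hwp).trans (h w y hw' hy (gridAdj_symm hadj) hady)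
      · refine ⟨fun _ => ?_, fun h'' => absurd h'' hvp⟩
        by_cases hwp : w = p
        · rw [hwp] at hadj
          have hv' : v ∈ B.erase p := Finset.mem_erase.mpr ⟨hvp, hvB⟩
          exact ih.2 hwp v hv' hadj
        · have hw' : w ∈ B.erase p := Finset.mem_erase.mpr ⟨hwp, hwB⟩
          have hv' : v ∈ B.erase p := Finset.mem_erase.mpr ⟨hvp, hvB⟩
          exact (ih.1 hwp).tail ⟨hw', hv', hadj⟩
  exact (key v hpath).1 (Finset.ne_of_mem_erase hv)

lemma sections_erase {B : Finset (ℕ × ℕ)} {p : ℕ × ℕ}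
    (hsec : sectionsAreIntervals B)
    (hrow : ∀ j, (p.1, j) ∈ B → j ≤ p.2)
    (hcol : (∀ i, (i, p.2) ∈ B → p.1 ≤ i) ∨ (∀ i, (i, p.2) ∈ B → i ≤ p.1)) :
    sectionsAreIntervals (B.erase p) := by
  obtain ⟨hr, hc⟩ := hsec
  constructor
  · intro i j₁ j₂ j₃ h12 h23 h1 h3
    have h1B := Finset.mem_of_mem_erase h1
    have h3B := Finset.mem_of_mem_erase h3
    have h2B := hr i j₁ j₂ j₃ h12 h23 h1B h3B
    refine Finset.mem_erase.mpr ⟨?_, h2B⟩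
    intro heq
    subst heq
    have h3' : j₃ ≤ j₂ := hrow j₃ h3B
    have : j₂ = j₃ := le_antisymm h23 h3'
    exact Finset.ne_of_mem_erase h3 (by rw [this])
  · intro j i₁ i₂ i₃ h12 h23 h1 h3
    have h1B := Finset.mem_of_mem_erase h1
    have h3B := Finset.mem_of_mem_erase h3
    have h2B := hc j i₁ i₂ i₃ h12 h23 h1B h3B
    refine Finset.mem_erase.mpr ⟨?_, h2B⟩
    intro heq
    subst heq
    rcases hcol with hcol | hcol
    · have h1' : i₂ ≤ i₁ := hcol i₁ h1B
      have : i₁ = i₂ := le_antisymm h12 h1'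
      exact Finset.ne_of_mem_erase h1 (by rw [this])
    · have h3' : i₃ ≤ i₂ := hcol i₃ h3B
      have : i₂ = i₃ := le_antisymm h23 h3'
      exact Finset.ne_of_mem_erase h3 (by rw [this])

lemma exists_nbr {B : Finset (ℕ × ℕ)} {p z : ℕ × ℕ} (hB : gridConnected B)
    (hp : p ∈ B) (hz : z ∈ B) (hzp : z ≠ p) :
    ∃ y ∈ B.erase p, gridAdj p y := by
  have h := hB.2 p hp z hz
  rcases Relation.ReflTransGen.cases_head h with heq | ⟨w, ⟨_, hwB, hadj⟩, _⟩
  · exact absurd heq.symm hzp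
  · refine ⟨w, Finset.mem_erase.mpr ⟨?_, hwB⟩, hadj⟩
    intro h'; subst h'; exact gridAdj_irrefl w hadj

/-- The key structural lemma: if `q = (t,c)` is the bottom cell of the rightmost
column and erasing it disconnects its two neighbours, then every cell strictly to
the left of column `c` lies in a row `≥ t`. -/
lemma struct_lemma {B : Finset (ℕ × ℕ)} (hB : gridUnimodal B) {c t i₀ j₁ : ℕ}
    (hc : ∀ x ∈ B, x.2 ≤ c) (hq : (t, c) ∈ B)
    (ht : ∀ i, (i, c) ∈ B → i ≤ t)
    (hi₀ : i₀ + 1 = t) (hj₁ : j₁ + 1 = c)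
    (hA : (i₀, c) ∈ B) (hC : (t, j₁) ∈ B)
    (hbad : ¬ conn (B.erase (t, c)) (i₀, c) (t, j₁)) :
    ∀ x ∈ B, x.2 < c → t ≤ x.1 := by
  obtain ⟨⟨hne, hconn⟩, hrowsec, hcolsec⟩ := hB
  -- step 1 : the diagonal cell is absent
  have hstep1 : (i₀, j₁) ∉ B := by
    intro hmem
    apply hbad
    have m1 : (i₀, c) ∈ B.erase (t, c) :=
      Finset.mem_erase.mpr ⟨by simp [Prod.ext_iff]; omega, hA⟩
    have m2 : (i₀, j₁) ∈ B.erase (t, c) :=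
      Finset.mem_erase.mpr ⟨by simp [Prod.ext_iff]; omega, hmem⟩
    have m3 : (t, j₁) ∈ B.erase (t, c) :=
      Finset.mem_erase.mpr ⟨by simp [Prod.ext_iff]; omega, hC⟩
    have a1 : gridAdj (i₀, c) (i₀, j₁) := Or.inl ⟨rfl, Or.inr hj₁.symm⟩
    have a2 : gridAdj (i₀, j₁) (t, j₁) := Or.inr ⟨rfl, Or.inl hi₀.symm⟩
    exact Relation.ReflTransGen.head ⟨m1, m2, a1⟩
      (Relation.ReflTransGen.single ⟨m2, m3, a2⟩)
  -- step 2 : column j₁ lies entirely in rows ≥ t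
  have hstep2 : ∀ i, (i, j₁) ∈ B → t ≤ i := by
    intro i hi
    by_contra hlt
    push_neg at hlt
    exact hstep1 (hcolsec j₁ i i₀ t (by omega) (by omega) hi hC)
  -- A'' : a cell left of column c whose row meets column c has row ≥ t
  have hA'' : ∀ i j, (i, j) ∈ B → j < c → (i, c) ∈ B → t ≤ i := by
    intro i j hij hjc hic
    exact hstep2 i (hrowsec i j j₁ c (by omega) (by omega) hij hic)
  -- the top of column c
  have hSne : ((B.filter (fun x => x.2 = c)).image Prod.fst).Nonempty := by
    have hmem : (t, c) ∈ B.filter (fun x => x.2 = c) := Finset.mem_filter.mpr ⟨hq, rfl⟩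
    exact ⟨t, Finset.mem_image_of_mem Prod.fst hmem⟩
  set s := ((B.filter (fun x => x.2 = c)).image Prod.fst).min' hSne with hs
  have hsmem : (s, c) ∈ B := by
    have := Finset.min'_mem _ hSne
    rw [Finset.mem_image] at this
    obtain ⟨x, hx, hx1⟩ := this
    rw [Finset.mem_filter] at hx
    have : x = (s, c) := by
      rcases x with ⟨x1, x2⟩; simp_all [Prod.ext_iff]
    rw [← this]; exact hx.1
  have hsle : ∀ i, (i, c) ∈ B → s ≤ i := by
    intro i hi
    have hmem : (i, c) ∈ B.filter (fun x => x.2 = c) := Finset.mem_filter.mpr ⟨hi, rfl⟩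
    exact Finset.min'_le _ _ (Finset.mem_image_of_mem Prod.fst hmem)
  have hst : s ≤ i₀ := hsle i₀ hA
  -- closure property: cells in rows < s are closed under adjacency
  have hP : ∀ x y : ℕ × ℕ, x ∈ B → y ∈ B → gridAdj x y → x.1 < s → y.1 < s := by
    intro x y hx hy hadj hxs
    rcases hadj with ⟨h1, _⟩ | ⟨h1, h2 | h2⟩
    · omega
    · -- y.1 = x.1 + 1
      by_contra hge
      push_neg at hge
      have hys : y.1 = s := by omega
      have hyc : y.2 ≤ c := hc y hy
      rcases eq_or_lt_of_le hyc with hyc | hyc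
      · -- y in column c, so x in column c too, contradiction with min'
        have hxc : (x.1, c) ∈ B := by
          have : x = (x.1, c) := by
            exact Prod.ext rfl (h1.trans hyc)
          rw [← this]; exact hx
        have := hsle x.1 hxc
        omega
      · -- y strictly left of column c with (y.1, c) ∈ B ⇒ t ≤ y.1 = s, absurd
        have hyyc : (y.1, c) ∈ B := by rw [hys]; exact hsmem
        have hyB : (y.1, y.2) ∈ B := by
          rcases y with ⟨y1, y2⟩; exact hy
        have := hA'' y.1 y.2 hyB hyc hyyc
        omega
    · omega
  -- final argument
  intro x hx hxc
  by_contra hlt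
  push_neg at hlt
  have hxcB : (x.1, c) ∉ B := by
    intro hmem
    have hxB : (x.1, x.2) ∈ B := by rcases x with ⟨x1, x2⟩; exact hx
    have := hA'' x.1 x.2 hxB hxc hmem
    omega
  have hxs : x.1 < s := by
    by_contra hge
    push_neg at hge
    exact hxcB (hcolsec c s x.1 t hge (by omega) hsmem hq)
  have := conn_closed hP (hconn x hx (t, c) hq) hxs
  simp at this
  omega

set_option maxHeartbeats 1000000 in
/-- If `B ⊆ [n-1] × [m-1]` is grid-unimodal with more than one element, then some cell
can be removed so that the remainder is still grid-unimodal, and the removed cell has a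
grid-neighbor in the remainder. -/
theorem stmt_5 (n m : ℕ) (B : Finset (ℕ × ℕ))
    (hsub : ∀ p ∈ B, 1 ≤ p.1 ∧ p.1 ≤ n - 1 ∧ 1 ≤ p.2 ∧ p.2 ≤ m - 1)
    (hB : gridUnimodal B) (hcard : 1 < B.card) :
    ∃ p ∈ B, gridUnimodal (B.erase p) ∧ ∃ q ∈ B.erase p, gridAdj p q := by
  classical
  obtain ⟨hBconn, hBsec⟩ := hB
  have hne : B.Nonempty := hBconn.1
  -- r : minimal row
  have hrne : (B.image Prod.fst).Nonempty := hne.image _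
  set r := (B.image Prod.fst).min' hrne with hrdef
  have hr : ∀ x ∈ B, r ≤ x.1 := fun x hx =>
    Finset.min'_le _ _ (Finset.mem_image_of_mem _ hx)
  -- b : maximal column of row r
  have hRne : ((B.filter (fun x => x.1 = r)).image Prod.snd).Nonempty := by
    have := Finset.min'_mem _ hrne
    rw [Finset.mem_image] at this
    obtain ⟨x, hx, hx1⟩ := this
    have hmem : x ∈ B.filter (fun y => y.1 = r) := Finset.mem_filter.mpr ⟨hx, hx1⟩
    exact ⟨x.2, Finset.mem_image_of_mem Prod.snd hmem⟩
  set b := ((B.filter (fun x => x.1 = r)).image Prod.snd).max' hRne with hbdef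
  have hpB : (r, b) ∈ B := by
    have := Finset.max'_mem _ hRne
    rw [Finset.mem_image] at this
    obtain ⟨x, hx, hx2⟩ := this
    rw [Finset.mem_filter] at hx
    have : x = (r, b) := by rcases x with ⟨x1, x2⟩; simp_all [Prod.ext_iff]
    rw [← this]; exact hx.1
  have hb : ∀ j, (r, j) ∈ B → j ≤ b := by
    intro j hj
    have hmem : (r, j) ∈ B.filter (fun x => x.1 = r) := Finset.mem_filter.mpr ⟨hj, rfl⟩
    exact Finset.le_max' _ _ (Finset.mem_image_of_mem Prod.snd hmem)
  -- c : maximal column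
  have hcne : (B.image Prod.snd).Nonempty := hne.image _
  set c := (B.image Prod.snd).max' hcne with hcdef
  have hc : ∀ x ∈ B, x.2 ≤ c := fun x hx =>
    Finset.le_max' _ _ (Finset.mem_image_of_mem _ hx)
  -- t : maximal row of column c
  have hCne : ((B.filter (fun x => x.2 = c)).image Prod.fst).Nonempty := by
    have := Finset.max'_mem _ hcne
    rw [Finset.mem_image] at this
    obtain ⟨x, hx, hx2⟩ := this
    have hmem : x ∈ B.filter (fun y => y.2 = c) := Finset.mem_filter.mpr ⟨hx, hx2⟩
    exact ⟨x.1, Finset.mem_image_of_mem Prod.fst hmem⟩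
  set t := ((B.filter (fun x => x.2 = c)).image Prod.fst).max' hCne with htdef
  have hqB : (t, c) ∈ B := by
    have := Finset.max'_mem _ hCne
    rw [Finset.mem_image] at this
    obtain ⟨x, hx, hx1⟩ := this
    rw [Finset.mem_filter] at hx
    have : x = (t, c) := by rcases x with ⟨x1, x2⟩; simp_all [Prod.ext_iff]
    rw [← this]; exact hx.1
  have ht : ∀ i, (i, c) ∈ B → i ≤ t := by
    intro i hi
    have hmem : (i, c) ∈ B.filter (fun x => x.2 = c) := Finset.mem_filter.mpr ⟨hi, rfl⟩
    exact Finset.le_max' _ _ (Finset.mem_image_of_mem Prod.fst hmem)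
  -- neighbour shapes
  have Np : ∀ a d, (a, d) ∈ B → gridAdj (r, b) (a, d) →
      (a = r ∧ d + 1 = b) ∨ (a = r + 1 ∧ d = b) := by
    intro a d hy hadj
    have h1 : r ≤ a := hr (a, d) hy
    rcases hadj with ⟨e1, e2 | e2⟩ | ⟨e1, e2 | e2⟩
    · -- r = a, d = b + 1 : contradiction with hb
      have e1' : r = a := e1
      have e2' : d = b + 1 := e2
      have : (r, d) ∈ B := by rw [e1']; exact hy
      have := hb d this
      omega
    · exact Or.inl ⟨e1.symm, e2.symm⟩
    · exact Or.inr ⟨e2, e1.symm⟩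
    · have e2' : r = a + 1 := e2
      omega
  have Nq : ∀ a d, (a, d) ∈ B → gridAdj (t, c) (a, d) →
      (a + 1 = t ∧ d = c) ∨ (a = t ∧ d + 1 = c) := by
    intro a d hy hadj
    have h1 : d ≤ c := hc (a, d) hy
    rcases hadj with ⟨e1, e2 | e2⟩ | ⟨e1, e2 | e2⟩
    · have e2' : d = c + 1 := e2
      omega
    · exact Or.inr ⟨e1.symm, e2.symm⟩
    · -- c = d, a = t + 1 : contradiction with ht
      have e1' : c = d := e1
      have e2' : a = t + 1 := e2
      have : (a, c) ∈ B := by rw [e1']; exact hy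
      have := ht a this
      omega
    · exact Or.inl ⟨e2.symm, e1.symm⟩
  -- erase is nonempty
  obtain ⟨z₀, hz₀B, hz₀⟩ := Finset.exists_mem_ne hcard (r, b)
  obtain ⟨z₁, hz₁B, hz₁⟩ := Finset.exists_mem_ne hcard (t, c)
  by_cases hgp : ∀ y z, y ∈ B.erase (r, b) → z ∈ B.erase (r, b) → gridAdj (r, b) y →
      gridAdj (r, b) z → conn (B.erase (r, b)) y z
  · -- p = (r,b) works
    refine ⟨(r, b), hpB, ⟨?_, ?_⟩, exists_nbr hBconn hpB hz₀B hz₀⟩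
    · exact erase_connected hBconn ⟨z₀, Finset.mem_erase.mpr ⟨hz₀, hz₀B⟩⟩ hgp
    · exact sections_erase hBsec (fun j hj => hb j hj) (Or.inl (fun i hi => hr (i, b) hi))
  · by_cases hgq : ∀ y z, y ∈ B.erase (t, c) → z ∈ B.erase (t, c) → gridAdj (t, c) y →
        gridAdj (t, c) z → conn (B.erase (t, c)) y z
    · -- q = (t,c) works
      refine ⟨(t, c), hqB, ⟨?_, ?_⟩, exists_nbr hBconn hqB hz₁B hz₁⟩
      · exact erase_connected hBconn ⟨z₁, Finset.mem_erase.mpr ⟨hz₁, hz₁B⟩⟩ hgq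
      · exact sections_erase hBsec (fun j hj => hc (t, j) hj)
          (Or.inr (fun i hi => ht i hi))
    · -- both fail: derive a contradiction
      exfalso
      push_neg at hgp hgq
      obtain ⟨y, z, hy, hz, hay, haz, hnc⟩ := hgp
      obtain ⟨y', z', hy', hz', hay', haz', hnc'⟩ := hgq
      obtain ⟨y1, y2⟩ := y
      obtain ⟨z1, z2⟩ := z
      obtain ⟨u1, u2⟩ := y'
      obtain ⟨v1, v2⟩ := z'
      have hyz : ¬(y1 = z1 ∧ y2 = z2) := by
        rintro ⟨rfl, rfl⟩; exact hnc Relation.ReflTransGen.refl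
      have hyz' : ¬(u1 = v1 ∧ u2 = v2) := by
        rintro ⟨rfl, rfl⟩; exact hnc' Relation.ReflTransGen.refl
      have hyB := Finset.mem_of_mem_erase hy
      have hzB := Finset.mem_of_mem_erase hz
      have huB := Finset.mem_of_mem_erase hy'
      have hvB := Finset.mem_of_mem_erase hz'
      -- p-side: some neighbour has shape (r, j₀) with j₀ + 1 = b
      have hpleft : ∃ j₀, j₀ + 1 = b ∧ (r, j₀) ∈ B := by
        rcases Np y1 y2 hyB hay with ⟨e1, e2⟩ | ⟨e1, e2⟩
        · exact ⟨y2, e2, by rw [← e1]; exact hyB⟩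
        · rcases Np z1 z2 hzB haz with ⟨f1, f2⟩ | ⟨f1, f2⟩
          · exact ⟨z2, f2, by rw [← f1]; exact hzB⟩
          · exact absurd ⟨by omega, by omega⟩ hyz
      obtain ⟨j₀, hj₀, hj₀B⟩ := hpleft
      -- q-side: full data for the structural lemma
      have hqd : ∃ i₀ j₁, i₀ + 1 = t ∧ j₁ + 1 = c ∧ (i₀, c) ∈ B ∧ (t, j₁) ∈ B ∧
          ¬ conn (B.erase (t, c)) (i₀, c) (t, j₁) := by
        rcases Nq u1 u2 huB hay' with ⟨e1, e2⟩ | ⟨e1, e2⟩ <;>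
          rcases Nq v1 v2 hvB haz' with ⟨f1, f2⟩ | ⟨f1, f2⟩
        · exact absurd ⟨by omega, by omega⟩ hyz'
        · subst e2; subst f1
          exact ⟨u1, v2, e1, f2, huB, hvB, hnc'⟩
        · subst e1; subst f2
          exact ⟨v1, u2, f1, e2, hvB, huB, fun hcc => hnc' (conn_symm hcc)⟩
        · exact absurd ⟨by omega, by omega⟩ hyz'
      obtain ⟨i₀, j₁, hi₀, hj₁, hAq, hCq, hbadq⟩ := hqd
      have hS2 := struct_lemma ⟨hBconn, hBsec⟩ hc hqB ht hi₀ hj₁ hAq hCq hbadq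
      have hbc : b ≤ c := hc (r, b) hpB
      have hj₀c : j₀ < c := by omega
      have h1 : t ≤ r := hS2 (r, j₀) hj₀B hj₀c
      have h2 : r ≤ i₀ := hr (i₀, c) hAq
      omega
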